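/- Let $u:\mathbb{R}^d\setminus\Omega\to\mathbb{R}$ be a $C^2$ locally strictly convex function on the complement of a bounded open set $\Omega$, and suppose $u=0$ and $\partial u/\partial\nu = 1$ on $\partial\Omega$, where $\nu$ is the outer unit normal of $\Omega$ and $\Omega$ is strictly convex. Then for every $x\in\mathbb{R}^d\setminus\bar\Omega$, $|Du(x)|>1$; i.e. the gradient image $Du(\mathbb{R}^d\setminus\bar\Omega)$ is contained in $\mathbb{R}^d\setminus\bar B_1(0)$. -/

import Mathlib

open scoped RealInnerProductSpace

open Set InnerProductSpace

set_option maxHeartbeats 1600000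

/-- A continuous path starting in an open set and ending outside it crosses the frontier. -/
lemma cross_frontier {E : Type*} [TopologicalSpace E] {Ω : Set E} (hΩ : IsOpen Ω)
    {f : ℝ → E} (hf : Continuous f) {L : ℝ} (hL : 0 ≤ L)
    (h0 : f 0 ∈ Ω) (h1 : f L ∉ Ω) :
    ∃ t ∈ Set.Icc (0:ℝ) L, f t ∈ frontier Ω := by
  set S : Set ℝ := Set.Icc 0 L ∩ f ⁻¹' Ωᶜ with hS
  have hSclosed : IsClosed S := isClosed_Icc.inter (hΩ.isClosed_compl.preimage hf)
  have hSne : S.Nonempty := ⟨L, ⟨⟨hL, le_refl L⟩, h1⟩⟩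
  have hSbdd : BddBelow S := ⟨0, fun t ht => ht.1.1⟩
  have htS : sInf S ∈ S := hSclosed.csInf_mem hSne hSbdd
  set t₀ := sInf S with ht₀
  have ht₀Icc : t₀ ∈ Set.Icc (0:ℝ) L := htS.1
  have hft₀ : f t₀ ∉ Ω := htS.2
  have ht₀pos : 0 < t₀ := by
    rcases lt_or_eq_of_le ht₀Icc.1 with h | h
    · exact h
    · exact absurd (h ▸ hft₀) (by simp [h0])
  have hbefore : ∀ t ∈ Set.Ico (0:ℝ) t₀, f t ∈ Ω := by
    intro t ht
    by_contra hc
    have htS' : t ∈ S := ⟨⟨ht.1, ht.2.le.trans ht₀Icc.2⟩, hc⟩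
    exact absurd (csInf_le hSbdd htS') (not_le.mpr ht.2)
  have hclos : f t₀ ∈ closure Ω := by
    have h1' : t₀ ∈ closure (Set.Ico (0:ℝ) t₀) := by
      rw [closure_Ico (ne_of_lt ht₀pos)]
      exact ⟨ht₀pos.le, le_refl _⟩
    have := image_closure_subset_closure_image hf (Set.mem_image_of_mem f h1')
    exact closure_mono (Set.image_subset_iff.mpr fun t ht => hbefore t ht) this
  exact ⟨t₀, ht₀Icc, by rw [hΩ.frontier_eq]; exact ⟨hclos, hft₀⟩⟩

theorem stmt10 (d : ℕ) (hd : 3 ≤ d) (Ω : Set (EuclideanSpace ℝ (Fin d)))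
    (hΩo : IsOpen Ω) (hΩb : Bornology.IsBounded Ω) (hΩc : StrictConvex ℝ Ω)
    (hΩne : Ω.Nonempty)
    (u : EuclideanSpace ℝ (Fin d) → ℝ)
    (hu : ContDiffOn ℝ 2 u Ωᶜ)
    (hconv : ∀ x ∉ Ω, ∀ v : EuclideanSpace ℝ (Fin d), v ≠ 0 →
      0 < iteratedFDeriv ℝ 2 u x ![v, v])
    (ν : EuclideanSpace ℝ (Fin d) → EuclideanSpace ℝ (Fin d))
    (hν : ∀ x ∈ frontier Ω, ‖ν x‖ = 1 ∧ ∀ y ∈ closure Ω, ⟪ν x, y - x⟫ ≤ 0)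
    (hbd0 : ∀ x ∈ frontier Ω, u x = 0)
    (hbd1 : ∀ x ∈ frontier Ω, ⟪gradient u x, ν x⟫ = 1) :
    ∀ x ∉ closure Ω, 1 < ‖gradient u x‖ := by
  intro x hx
  have hgradf : ∀ w v : EuclideanSpace ℝ (Fin d), (fderiv ℝ u w) v = ⟪gradient u w, v⟫ := by
    intro w v
    rw [← toDual_apply_apply (𝕜 := ℝ)]
    congr 1
    simp [gradient]
  have hunit : ∀ m : EuclideanSpace ℝ (Fin d), m ≠ 0 → ‖‖m‖⁻¹ • m‖ = 1 := by
    intro m hm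
    have h0 : 0 < ‖m‖ := norm_pos_iff.mpr hm
    rw [norm_smul, norm_inv, norm_norm]
    field_simp
  -- projection of x onto closure Ω
  have hKne : (closure Ω).Nonempty := hΩne.closure
  have hKconv : Convex ℝ (closure Ω) := hΩc.convex.closure
  have hKcomplete : IsComplete (closure Ω) := isClosed_closure.isComplete
  obtain ⟨y, hyK, hymin⟩ := exists_norm_eq_iInf_of_complete_convex hKne hKcomplete hKconv x
  have hproj : ∀ z ∈ closure Ω, ⟪x - y, z - y⟫ ≤ 0 :=
    (norm_eq_iInf_iff_real_inner_le_zero hKconv hyK).1 hymin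
  set n : EuclideanSpace ℝ (Fin d) := x - y with hn
  have hn0 : n ≠ 0 := sub_ne_zero.mpr (fun h => hx (by rw [h]; exact hyK))
  have hnnorm : 0 < ‖n‖ := norm_pos_iff.mpr hn0
  set nh : EuclideanSpace ℝ (Fin d) := ‖n‖⁻¹ • n with hnh
  have hnh1 : ‖nh‖ = 1 := hunit n hn0
  have hnhN : ∀ z ∈ closure Ω, ⟪nh, z - y⟫ ≤ 0 := by
    intro z hz
    rw [hnh, real_inner_smul_left]
    exact mul_nonpos_of_nonneg_of_nonpos (by positivity) (hproj z hz)
  -- y is on the frontier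
  have hyΩ : y ∉ Ω := by
    intro hyΩ
    obtain ⟨δ, hδ, hball⟩ := Metric.isOpen_iff.1 hΩo y hyΩ
    have hz : y + (δ/2) • nh ∈ Ω := by
      apply hball
      rw [Metric.mem_ball, dist_eq_norm, add_sub_cancel_left, norm_smul, hnh1]
      simp only [Real.norm_eq_abs, abs_of_pos (by linarith : (0:ℝ) < δ/2)]
      linarith
    have h1 := hproj _ (subset_closure hz)
    rw [add_sub_cancel_left, real_inner_smul_right] at h1
    have h2 : ⟪x - y, nh⟫ = ‖n‖ := by
      rw [hnh, real_inner_smul_right, ← hn, real_inner_self_eq_norm_mul_norm]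
      field_simp
    rw [h2] at h1
    nlinarith
  have hyf : y ∈ frontier Ω := by rw [hΩo.frontier_eq]; exact ⟨hyK, hyΩ⟩
  obtain ⟨hν1, hν2⟩ := hν y hyf
  -- p = gradient at y
  set p : EuclideanSpace ℝ (Fin d) := gradient u y with hp
  have hp1 : ⟪p, ν y⟫ = 1 := hbd1 y hyf
  have hp0 : p ≠ 0 := by
    intro h
    rw [h, inner_zero_left] at hp1
    norm_num at hp1
  have hpdiff : DifferentiableAt ℝ u y := by
    by_contra h
    exact hp0 (gradient_eq_zero_of_not_differentiableAt h)
  have hfder : HasFDerivAt u (toDual ℝ (EuclideanSpace ℝ (Fin d)) p) y :=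
    hpdiff.hasGradientAt.hasFDerivAt
  -- interior point
  obtain ⟨z₀, hz₀⟩ := hΩne
  -- the key construction
  have key : ∀ m : EuclideanSpace ℝ (Fin d), ‖m‖ = 1 →
      (∀ z ∈ closure Ω, ⟪m, z - y⟫ ≤ 0) → ∀ z ∈ Ω, ∀ ε : ℝ, 0 < ε →
      ∃ s r : ℝ, 0 < s ∧ 0 ≤ r ∧ r ≤ s * (-⟪m, z - y⟫) ∧
        |s * ⟪p, z - y⟫ + r * ⟪p, m⟫| ≤ ε * s := by
    intro m hm1 hmN z hz ε hε
    have ha0 : 0 ≤ -⟪m, z - y⟫ := by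
      simp only [neg_nonneg]; exact hmN z (subset_closure hz)
    set a : ℝ := -⟪m, z - y⟫ with ha
    have hma : ⟪m, z - y⟫ = -a := by rw [ha]; ring
    set C : ℝ := ‖z - y‖ + a + 1 with hC
    have hC0 : 0 < C := by positivity
    -- little-o bound
    have hlo := hfder.isLittleO.bound (show (0:ℝ) < ε / C by positivity)
    rw [Metric.eventually_nhds_iff] at hlo
    obtain ⟨δ, hδ, hδbound⟩ := hlo
    set s : ℝ := min (δ / (2 * C)) 2⁻¹ with hs
    have hs0 : 0 < s := lt_min (by positivity) (by norm_num)
    have hs1 : s < 1 := lt_of_le_of_lt (min_le_right _ _) (by norm_num)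
    have hsC : s * C < δ := by
      have h1 : s ≤ δ / (2 * C) := min_le_left _ _
      have h2 : s * C ≤ δ / 2 := by
        calc s * C ≤ (δ / (2 * C)) * C := mul_le_mul_of_nonneg_right h1 hC0.le
        _ = δ / 2 := by field_simp
      exact lt_of_le_of_lt h2 (half_lt_self hδ)
    -- the interior point c on the segment
    set c : EuclideanSpace ℝ (Fin d) := y + s • (z - y) with hc
    have hcΩ : c ∈ Ω := by
      have hmem : c ∈ openSegment ℝ y z := by
        refine ⟨1 - s, s, by linarith, hs0, by ring, ?_⟩
        rw [hc, smul_sub]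
        module
      have := hΩc.convex.openSegment_closure_interior_subset_interior hyK
        (by rwa [hΩo.interior_eq]) hmem
      rwa [hΩo.interior_eq] at this
    -- path in direction m
    set L : ℝ := s * a + 1 with hL
    have hL0 : (0:ℝ) ≤ L := by positivity
    have hfL : c + L • m ∉ Ω := by
      intro hmem
      have h1 := hmN _ (subset_closure hmem)
      have heq : (c + L • m) - y = s • (z - y) + L • m := by rw [hc]; abel
      rw [heq, inner_add_right, real_inner_smul_right, real_inner_smul_right,
        real_inner_self_eq_norm_mul_norm, hm1, hma] at h1
      nlinarith
    obtain ⟨t, htIcc, htf⟩ := cross_frontier hΩo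
      (continuous_const.add (continuous_id.smul continuous_const)) hL0
      (by simpa using hcΩ) (by simpa using hfL)
    set w : EuclideanSpace ℝ (Fin d) := c + t • m with hw
    have hwfront : w ∈ frontier Ω := htf
    have hwK : w ∈ closure Ω := frontier_subset_closure hwfront
    have hwy : w - y = s • (z - y) + t • m := by rw [hw, hc]; abel
    have htle : t ≤ s * a := by
      have h1 := hmN w hwK
      rw [hwy, inner_add_right, real_inner_smul_right, real_inner_smul_right,
        real_inner_self_eq_norm_mul_norm, hm1, hma] at h1
      nlinarith
    have hwnorm : ‖w - y‖ ≤ s * C := by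
      rw [hwy]
      calc ‖s • (z - y) + t • m‖ ≤ ‖s • (z - y)‖ + ‖t • m‖ := norm_add_le _ _
      _ = s * ‖z - y‖ + |t| * ‖m‖ := by
          rw [norm_smul, norm_smul, Real.norm_eq_abs, Real.norm_eq_abs, abs_of_pos hs0]
      _ = s * ‖z - y‖ + t := by rw [hm1, abs_of_nonneg htIcc.1]; ring
      _ ≤ s * ‖z - y‖ + s * a := by linarith
      _ ≤ s * C := by rw [hC]; nlinarith [norm_nonneg (z - y)]
    have hdist : dist w y < δ := by
      rw [dist_eq_norm]; linarith
    have hbound := hδbound hdist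
    have hinner : (toDual ℝ (EuclideanSpace ℝ (Fin d)) p) (w - y)
        = s * ⟪p, z - y⟫ + t * ⟪p, m⟫ := by
      rw [toDual_apply_apply, hwy, inner_add_right, real_inner_smul_right, real_inner_smul_right]
    rw [hinner, hbd0 w hwfront, hbd0 y hyf] at hbound
    have hval : |s * ⟪p, z - y⟫ + t * ⟪p, m⟫| ≤ ε / C * ‖w - y‖ := by
      have h := hbound
      rw [Real.norm_eq_abs] at h
      have heq : (0:ℝ) - 0 - (s * ⟪p, z - y⟫ + t * ⟪p, m⟫)
          = -(s * ⟪p, z - y⟫ + t * ⟪p, m⟫) := by ring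
      rw [heq, abs_neg] at h
      exact h
    refine ⟨s, t, hs0, htIcc.1, htle, ?_⟩
    calc |s * ⟪p, z - y⟫ + t * ⟪p, m⟫| ≤ ε / C * ‖w - y‖ := hval
    _ ≤ ε / C * (s * C) := mul_le_mul_of_nonneg_left hwnorm (by positivity)
    _ = ε * s := by field_simp
  -- p is an outer normal
  have hpN : ∀ z ∈ closure Ω, ⟪p, z - y⟫ ≤ 0 := by
    have hΩcase : ∀ z ∈ Ω, ⟪p, z - y⟫ ≤ 0 := by
      intro z hz
      by_contra hcon
      push_neg at hcon
      obtain ⟨s, r, hs0, hr0, _, habs⟩ := key (ν y) hν1 hν2 z hz (⟪p, z - y⟫ / 2) (by linarith)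
      rw [hp1, mul_one] at habs
      have h1 : s * ⟪p, z - y⟫ + r ≤ ⟪p, z - y⟫ / 2 * s := (abs_le.1 habs).2
      nlinarith
    intro z hz
    have hclosed : IsClosed {z : EuclideanSpace ℝ (Fin d) | ⟪p, z - y⟫ ≤ 0} :=
      isClosed_le (Continuous.inner continuous_const (continuous_id.sub continuous_const))
        continuous_const
    exact closure_minimal hΩcase hclosed hz
  -- strict negativity at interior points, for any nonzero normal
  have haneg : ∀ m : EuclideanSpace ℝ (Fin d), m ≠ 0 →
      (∀ z ∈ closure Ω, ⟪m, z - y⟫ ≤ 0) → ∀ z ∈ Ω, ⟪m, z - y⟫ < 0 := by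
    intro m hm0 hmN z hz
    obtain ⟨δ, hδ, hball⟩ := Metric.isOpen_iff.1 hΩo z hz
    have hz' : z + (δ/2) • (‖m‖⁻¹ • m) ∈ Ω := by
      apply hball
      rw [Metric.mem_ball, dist_eq_norm, add_sub_cancel_left, norm_smul,
        hunit m hm0]
      simp only [Real.norm_eq_abs, abs_of_pos (by linarith : (0:ℝ) < δ/2)]
      linarith
    have h1 := hmN _ (subset_closure hz')
    have heq : (z + (δ/2) • (‖m‖⁻¹ • m)) - y = (z - y) + (δ/2) • (‖m‖⁻¹ • m) := by abel
    rw [heq, inner_add_right, real_inner_smul_right, real_inner_smul_right,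
      real_inner_self_eq_norm_mul_norm] at h1
    have hmnorm : 0 < ‖m‖ := norm_pos_iff.mpr hm0
    have h2 : ⟪m, z - y⟫ ≤ -((δ/2) * (‖m‖⁻¹ * (‖m‖ * ‖m‖))) := by linarith
    have h3 : (0:ℝ) < (δ/2) * (‖m‖⁻¹ * (‖m‖ * ‖m‖)) := by positivity
    linarith
  have hβ : 0 < -⟪p, z₀ - y⟫ := by
    have := haneg p hp0 hpN z₀ hz₀
    linarith
  set β : ℝ := -⟪p, z₀ - y⟫ with hβdef
  have hβz : ⟪p, z₀ - y⟫ = -β := by rw [hβdef]; ring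
  -- positivity of ⟪p, m⟫ for unit normals m
  have hpos : ∀ m : EuclideanSpace ℝ (Fin d), ‖m‖ = 1 →
      (∀ z ∈ closure Ω, ⟪m, z - y⟫ ≤ 0) → 0 < ⟪p, m⟫ := by
    intro m hm1 hmN
    obtain ⟨s, r, hs0, hr0, _, habs⟩ := key m hm1 hmN z₀ hz₀ (β/2) (by linarith)
    have h1 : -(β/2 * s) ≤ s * ⟪p, z₀ - y⟫ + r * ⟪p, m⟫ := (abs_le.1 habs).1
    rw [hβz] at h1
    have h3 : 0 < r * ⟪p, m⟫ := by nlinarith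
    by_contra hcon
    push_neg at hcon
    nlinarith
  have hα : 0 < ⟪p, nh⟫ := hpos nh hnh1 hnhN
  set α : ℝ := ⟪p, nh⟫ with hαdef
  -- q = α nh - p is an outer normal
  have hqN : ∀ z ∈ closure Ω, ⟪α • nh - p, z - y⟫ ≤ 0 := by
    have hΩcase : ∀ z ∈ Ω, ⟪α • nh - p, z - y⟫ ≤ 0 := by
      intro z hz
      have hnh0 : nh ≠ 0 := by
        intro h; rw [h, norm_zero] at hnh1; norm_num at hnh1
      have haz : 0 < -⟪nh, z - y⟫ := by
        have := haneg nh hnh0 hnhN z hz; linarith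
      have hkey : ∀ ε : ℝ, 0 < ε → -⟪p, z - y⟫ ≤ (-⟪nh, z - y⟫) * α + ε := by
        intro ε hε
        obtain ⟨s, r, hs0, hr0, hra, habs⟩ := key nh hnh1 hnhN z hz ε hε
        have h1 : -(ε * s) ≤ s * ⟪p, z - y⟫ + r * ⟪p, nh⟫ := (abs_le.1 habs).1
        have h2 : r * α ≤ (s * (-⟪nh, z - y⟫)) * α :=
          mul_le_mul_of_nonneg_right hra hα.le
        nlinarith [hαdef]
      have hfin : -⟪p, z - y⟫ ≤ (-⟪nh, z - y⟫) * α := by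
        by_contra hcon
        push_neg at hcon
        have := hkey ((-⟪p, z - y⟫ - (-⟪nh, z - y⟫) * α)/2) (by linarith)
        linarith
      rw [inner_sub_left, real_inner_smul_left]
      nlinarith [hfin]
    intro z hz
    have hclosed : IsClosed {z : EuclideanSpace ℝ (Fin d) | ⟪α • nh - p, z - y⟫ ≤ 0} :=
      isClosed_le (Continuous.inner continuous_const (continuous_id.sub continuous_const))
        continuous_const
    exact closure_minimal hΩcase hclosed hz
  -- α ≥ ‖p‖ ≥ 1
  have hp_ge1 : 1 ≤ ‖p‖ := by
    have := real_inner_le_norm p (ν y)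
    rw [hp1, hν1, mul_one] at this
    linarith
  have hα_ge : ‖p‖ ≤ α := by
    by_cases hq : α • nh - p = 0
    · have hpeq : p = α • nh := by rw [sub_eq_zero] at hq; exact hq.symm
      rw [hpeq, norm_smul, hnh1, mul_one, Real.norm_eq_abs, abs_of_pos hα]
    · have hq1 : ‖(‖α • nh - p‖⁻¹) • (α • nh - p)‖ = 1 := hunit _ hq
      have hqN' : ∀ z ∈ closure Ω, ⟪(‖α • nh - p‖⁻¹) • (α • nh - p), z - y⟫ ≤ 0 := by
        intro z hz
        rw [real_inner_smul_left]
        exact mul_nonpos_of_nonneg_of_nonpos (by positivity) (hqN z hz)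
      have hpq := hpos _ hq1 hqN'
      rw [real_inner_smul_right] at hpq
      have hqpos : 0 < ⟪p, α • nh - p⟫ := by
        have hnp : 0 < ‖α • nh - p‖⁻¹ := by
          have : 0 < ‖α • nh - p‖ := norm_pos_iff.mpr hq
          positivity
        nlinarith
      rw [inner_sub_right, real_inner_smul_right, real_inner_self_eq_norm_mul_norm,
        ← hαdef] at hqpos
      nlinarith [norm_nonneg p]
  have hpn_ge : ‖n‖ ≤ ⟪p, n⟫ := by
    have hneq : ⟪p, n⟫ = ‖n‖ * α := by
      rw [hαdef, hnh, real_inner_smul_right]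
      field_simp
    rw [hneq]
    nlinarith [hp_ge1, hα_ge, hnnorm]
  -- Calculus along the segment from y to x
  set γ : ℝ → EuclideanSpace ℝ (Fin d) := fun t => y + t • n with hγ
  have hγ0 : γ 0 = y := by simp [hγ]
  have hγ1 : γ 1 = x := by simp [hγ, hn]
  have hout : ∀ t : ℝ, 0 < t → γ t ∉ closure Ω := by
    intro t ht hmem
    have h1 := hproj (γ t) hmem
    have heq : γ t - y = t • n := by simp [hγ]
    rw [heq, real_inner_smul_right, real_inner_self_eq_norm_mul_norm] at h1
    nlinarith [mul_pos ht (mul_pos hnnorm hnnorm)]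
  have hγΩc : ∀ t : ℝ, 0 ≤ t → γ t ∈ Ωᶜ := by
    intro t ht
    rcases eq_or_lt_of_le ht with h | h
    · rw [← h, hγ0]; exact hyΩ
    · exact fun hmem => hout t h (subset_closure hmem)
  have hudiff2 : ∀ t : ℝ, 0 < t → ContDiffAt ℝ 2 u (γ t) := by
    intro t ht
    apply hu.contDiffAt
    exact Filter.mem_of_superset (isClosed_closure.isOpen_compl.mem_nhds (hout t ht))
      (Set.compl_subset_compl.2 subset_closure)
  have hγd : ∀ t : ℝ, HasDerivAt γ n t := by
    intro t
    have h1 : HasDerivAt (fun s : ℝ => s • n) ((1:ℝ) • n) t := (hasDerivAt_id t).smul_const n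
    simpa [hγ, one_smul] using h1.const_add y
  set H : ℝ → ℝ := fun t => (fderiv ℝ u (γ t)) n with hH
  have hdiffAt : ∀ t : ℝ, 0 ≤ t → DifferentiableAt ℝ u (γ t) := by
    intro t ht
    rcases eq_or_lt_of_le ht with h | h
    · rw [← h, hγ0]; exact hpdiff
    · exact (hudiff2 t h).differentiableAt two_ne_zero
  have hgd : ∀ t : ℝ, 0 ≤ t → HasDerivAt (u ∘ γ) (H t) t := by
    intro t ht
    refine HasFDerivAt.comp_hasDerivAt t ?_ (hγd t)
    exact (hdiffAt t ht).hasFDerivAt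
  have hHd : ∀ t : ℝ, 0 < t →
      HasDerivAt H ((fderiv ℝ (fderiv ℝ u) (γ t)) n n) t := by
    intro t ht
    have hφ : DifferentiableAt ℝ (fderiv ℝ u) (γ t) :=
      ((hudiff2 t ht).fderiv_right (m := 1) (by norm_num)).differentiableAt one_ne_zero
    have h1 : HasDerivAt ((fderiv ℝ u) ∘ γ) (fderiv ℝ (fderiv ℝ u) (γ t) n) t := by
      refine HasFDerivAt.comp_hasDerivAt t ?_ (hγd t)
      exact hφ.hasFDerivAt
    have h2 : HasDerivAt ((ContinuousLinearMap.apply ℝ ℝ n) ∘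
        ((fderiv ℝ u) ∘ γ)) ((fderiv ℝ (fderiv ℝ u) (γ t) n) n) t := by
      exact HasFDerivAt.comp_hasDerivAt t
        ((ContinuousLinearMap.apply ℝ ℝ n).hasFDerivAt) h1
    exact h2
  have hκpos : ∀ t : ℝ, 0 < t → 0 < (fderiv ℝ (fderiv ℝ u) (γ t)) n n := by
    intro t ht
    have h1 := hconv (γ t) (fun hmem => hout t ht (subset_closure hmem)) n hn0
    rw [iteratedFDeriv_two_apply] at h1
    simpa using h1
  have hmono : ∀ s t : ℝ, 0 < s → s < t → H s < H t := by
    intro s t hs hst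
    have hsub : Set.Icc s t ⊆ Set.Ioi 0 := fun τ hτ => lt_of_lt_of_le hs hτ.1
    have hcont : ContinuousOn H (Set.Icc s t) := fun τ hτ =>
      ((hHd τ (hsub hτ)).continuousAt).continuousWithinAt
    have hmo := strictMonoOn_of_deriv_pos (convex_Icc s t) hcont (fun τ hτ => by
      rw [interior_Icc] at hτ
      rw [(hHd τ (lt_trans hs hτ.1)).deriv]
      exact hκpos τ (lt_trans hs hτ.1))
    exact hmo (Set.left_mem_Icc.2 hst.le) (Set.right_mem_Icc.2 hst.le) hst
  -- slope bound: H 0 ≤ H (1/2)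
  have hslope : ∀ t : ℝ, t ∈ Set.Ioc (0:ℝ) (1/2) →
      ((u ∘ γ) t - (u ∘ γ) 0) / t ≤ H (1/2) := by
    intro t ht
    have hcont : ContinuousOn (u ∘ γ) (Set.Icc 0 t) := by
      apply hu.continuousOn.comp
      · exact (continuous_const.add (continuous_id.smul continuous_const)).continuousOn
      · intro τ hτ
        exact hγΩc τ hτ.1
    obtain ⟨c, hc, hceq⟩ := exists_hasDerivAt_eq_slope (u ∘ γ) H ht.1 hcont
      (fun τ hτ => hgd τ hτ.1.le)
    rw [sub_zero] at hceq
    rw [← hceq]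
    have hc12 : c < 1/2 := lt_of_lt_of_le hc.2 ht.2
    exact (hmono c (1/2) hc.1 hc12).le
  have hH0le : H 0 ≤ H (1/2) := by
    have hder : HasDerivAt (u ∘ γ) (H 0) 0 := hgd 0 (le_refl 0)
    have htend : Filter.Tendsto (slope (u ∘ γ) 0) (nhdsWithin 0 {(0:ℝ)}ᶜ) (nhds (H 0)) :=
      hasDerivAt_iff_tendsto_slope.1 hder
    have htend' : Filter.Tendsto (slope (u ∘ γ) 0) (nhdsWithin 0 (Set.Ioi 0)) (nhds (H 0)) :=
      htend.mono_left (nhdsWithin_mono 0 (fun τ hτ => ne_of_gt hτ))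
    apply le_of_tendsto htend'
    filter_upwards [Ioc_mem_nhdsGT (by norm_num : (0:ℝ) < 1/2)] with t ht
    rw [slope_def_field, sub_zero]
    exact hslope t ht
  -- conclusion
  have hH1 : H (1/2) < H 1 := hmono (1/2) 1 (by norm_num) (by norm_num)
  have hH0eq : H 0 = ⟪p, n⟫ := by
    show (fderiv ℝ u (γ 0)) n = _
    rw [hγ0, hgradf, ← hp]
  have hH1eq : H 1 = ⟪gradient u x, n⟫ := by
    show (fderiv ℝ u (γ 1)) n = _
    rw [hγ1, hgradf]
  have hfinal : ‖n‖ < ⟪gradient u x, n⟫ := by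
    rw [← hH1eq]
    calc ‖n‖ ≤ ⟪p, n⟫ := hpn_ge
    _ = H 0 := hH0eq.symm
    _ ≤ H (1/2) := hH0le
    _ < H 1 := hH1
  have hcs := real_inner_le_norm (gradient u x) n
  by_contra hcon
  push_neg at hcon
  nlinarith [norm_nonneg (gradient u x)]
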